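/- Let S be a Cu-semigroup satisfying (O5) and let m ∈ ℕ. Then S has m-comparison if and only if for all x, y₀, …, y_m ∈ S and every γ ∈ (0,1): if λ(x) ≤ γ·λ(y_j) for every functional λ on S and every j = 0, …, m, then x ≤ y₀+…+y_m. In particular, if S has m-comparison and x, y ∈ S satisfy λ(x) ≤ λ(y) for every functional λ on S, then x ≤ 2(m+1)·y. -/

import Mathlib

open scoped ENNReal

section CuPreamble

variable {S : Type*} [AddCommMonoid S] [PartialOrder S]

/-- The way-below (compact containment) relation: `x ≪ y` if for every increasing
sequence with a supremum above `y`, some term dominates `x`. -/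
def WayBelow (x y : S) : Prop :=
  ∀ (f : ℕ → S) (s : S), Monotone f → IsLUB (Set.range f) s → y ≤ s → ∃ n, x ≤ f n

/-- A Cu-semigroup: a positively ordered commutative monoid satisfying (O1)-(O4). -/
structure IsCuSemigroup (S : Type*) [AddCommMonoid S] [PartialOrder S] : Prop where
  zero_le : ∀ x : S, 0 ≤ x
  add_le_add : ∀ ⦃a b c d : S⦄, a ≤ b → c ≤ d → a + c ≤ b + d
  O1 : ∀ f : ℕ → S, Monotone f → ∃ s : S, IsLUB (Set.range f) s
  O2 : ∀ x : S, ∃ f : ℕ → S, (∀ n, WayBelow (f n) (f (n + 1))) ∧ IsLUB (Set.range f) x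
  O3 : ∀ ⦃x₁ x₂ y₁ y₂ : S⦄, WayBelow x₁ x₂ → WayBelow y₁ y₂ → WayBelow (x₁ + y₁) (x₂ + y₂)
  O4 : ∀ (f g : ℕ → S) (s t : S), Monotone f → Monotone g → IsLUB (Set.range f) s →
    IsLUB (Set.range g) t → IsLUB (Set.range fun n => f n + g n) (s + t)

/-- The axiom (O5), including the strengthened form. -/
def SatisfiesO5 (S : Type*) [AddCommMonoid S] [PartialOrder S] : Prop :=
  (∀ x' x y : S, WayBelow x' x → x ≤ y → ∃ z : S, x' + z ≤ y ∧ y ≤ x + z) ∧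
  (∀ x' x y w' w : S, WayBelow x' x → x + w ≤ y → WayBelow w' w →
    ∃ z : S, WayBelow w' z ∧ x' + z ≤ y ∧ y ≤ x + z)

/-- The axiom (O6). -/
def SatisfiesO6 (S : Type*) [AddCommMonoid S] [PartialOrder S] : Prop :=
  ∀ x' x y z : S, WayBelow x' x → x ≤ y + z →
    ∃ y' z' : S, x' ≤ y' + z' ∧ y' ≤ y ∧ y' ≤ x ∧ z' ≤ z ∧ z' ≤ x

/-- A functional on a Cu-semigroup: a map to `[0,∞]` preserving order, addition, zero,
and suprema of increasing sequences. -/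
structure IsFunctional (l : S → ℝ≥0∞) : Prop where
  mono : Monotone l
  map_zero : l 0 = 0
  map_add : ∀ x y : S, l (x + y) = l x + l y
  map_sup : ∀ (f : ℕ → S) (s : S), Monotone f → IsLUB (Set.range f) s → l s = ⨆ n, l (f n)

/-- Edwards' condition. -/
def EdwardsCondition (S : Type*) [AddCommMonoid S] [PartialOrder S] : Prop :=
  ∀ l : S → ℝ≥0∞, IsFunctional l → ∀ x y : S,
    sInf {r : ℝ≥0∞ | ∃ l₁ l₂ : S → ℝ≥0∞, IsFunctional l₁ ∧ IsFunctional l₂ ∧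
        (∀ s : S, l₁ s + l₂ s = l s) ∧ r = l₁ x + l₂ y} =
    sSup {r : ℝ≥0∞ | ∃ z : S, z ≤ x ∧ z ≤ y ∧ r = l z}

/-- A scale on a Cu-semigroup. -/
structure IsScale (Sg : Set S) : Prop where
  hered : ∀ ⦃x y : S⦄, y ≤ x → x ∈ Sg → y ∈ Sg
  supClosed : ∀ (f : ℕ → S) (s : S), Monotone f → (∀ n, f n ∈ Sg) →
    IsLUB (Set.range f) s → s ∈ Sg
  generates : ∀ x' x : S, WayBelow x' x → ∃ L : List S, (∀ z ∈ L, z ∈ Sg) ∧ x' ≤ L.sum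

/-- The `d`-fold amplification `Σ^{(d)}` of a scale. -/
def scaleAmp (Sg : Set S) : ℕ → Set S
  | 0 => {0}
  | d + 1 => {x : S | ∀ x' : S, WayBelow x' x →
      ∃ f : Fin (d + 1) → S, (∀ i, f i ∈ Sg) ∧ WayBelow x' (∑ i, f i)}

end CuPreamble

/-- `S` has `m`-comparison. -/
def MComparison {S : Type*} [AddCommMonoid S] [PartialOrder S] (m : ℕ) : Prop :=
  ∀ (x : S) (y : Fin (m + 1) → S),
    (∀ j, ∃ n : ℕ, (n + 1) • x ≤ n • y j) → x ≤ ∑ j, y j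

namespace Stmt9Aux
set_option linter.unusedSectionVars false

variable {S : Type*} [AddCommMonoid S] [PartialOrder S]

section Basics

variable (hCu : IsCuSemigroup S)
include hCu

theorem wb_le {x y : S} (h : WayBelow x y) : x ≤ y := by
  obtain ⟨n, hn⟩ := h (fun _ => y) y monotone_const (by rw [Set.range_const]; exact isLUB_singleton) le_rfl
  exact hn

theorem le_wb {x' x y : S} (h1 : x' ≤ x) (h2 : WayBelow x y) : WayBelow x' y := by
  intro f s hf hs hy
  obtain ⟨n, hn⟩ := h2 f s hf hs hy
  exact ⟨n, h1.trans hn⟩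

theorem wb_le_right {x y z : S} (h1 : WayBelow x y) (h2 : y ≤ z) : WayBelow x z := by
  intro f s hf hs hz
  exact h1 f s hf hs (h2.trans hz)

theorem zero_wb (z : S) : WayBelow (0 : S) z := by
  intro f s hf hs hz
  exact ⟨0, hCu.zero_le _⟩

theorem add_le_left {a b : S} (c : S) (h : a ≤ b) : a + c ≤ b + c := hCu.add_le_add h le_rfl

theorem le_add_right (a c : S) : a ≤ a + c := by
  have := hCu.add_le_add (le_refl a) (hCu.zero_le c)
  rwa [add_zero] at this

theorem nsmul_mono {a b : S} (n : ℕ) (h : a ≤ b) : n • a ≤ n • b := by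
  induction n with
  | zero => simp
  | succ k ih => rw [succ_nsmul, succ_nsmul]; exact hCu.add_le_add ih h

theorem nsmul_coeff_mono (a : S) {m n : ℕ} (h : m ≤ n) : m • a ≤ n • a := by
  obtain ⟨k, rfl⟩ := Nat.exists_eq_add_of_le h
  rw [add_nsmul]
  exact le_add_right hCu _ _

theorem wb_nsmul {a b : S} (h : WayBelow a b) (n : ℕ) : WayBelow (n • a) (n • b) := by
  induction n with
  | zero => simpa using zero_wb hCu (0 : S)
  | succ k ih => rw [succ_nsmul, succ_nsmul]; exact hCu.O3 ih h

theorem lub_le_mem {f : ℕ → S} {x : S} (h : IsLUB (Set.range f) x) (n : ℕ) : f n ≤ x :=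
  h.1 (Set.mem_range_self n)

theorem wb_exists_le {w x : S} (h : WayBelow w x) {f : ℕ → S} (hf : Monotone f)
    (hl : IsLUB (Set.range f) x) : ∃ n, w ≤ f n :=
  h f x hf hl le_rfl

/-- From an O2-chain, each term is way below the supremum. -/
theorem chain_wb {f : ℕ → S} (hseq : ∀ n, WayBelow (f n) (f (n + 1)))
    {x : S} (hl : IsLUB (Set.range f) x) (n : ℕ) : WayBelow (f n) x :=
  wb_le_right hCu (hseq n) (lub_le_mem hCu hl (n + 1))

theorem chain_mono {f : ℕ → S} (hseq : ∀ n, WayBelow (f n) (f (n + 1))) : Monotone f :=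
  monotone_nat_of_le_succ fun n => wb_le hCu (hseq n)

end Basics

section DE

variable (hCu : IsCuSemigroup S)
include hCu

/-- Iteration lemma: from `q•y + c ≤ p•y + c` with `p < q` and `c ≤ Nc•y`,
multiples of `y` are uniformly bounded, hence any `t' ≤ N'•y` satisfies `(n+1)•t' ≤ n•y`. -/
theorem lemD {y c t' : S} {q p Nc N' : ℕ} (hrel : q • y + c ≤ p • y + c)
    (hpq : p < q) (hc : c ≤ Nc • y) (ht' : t' ≤ N' • y) :
    ∃ n : ℕ, (n + 1) • t' ≤ n • y := by
  set δ := q - p with hδ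
  have hδpos : 0 < δ := Nat.sub_pos_of_lt hpq
  -- iterate : (p + j*δ)•y + c ≤ p•y + c
  have iter : ∀ j : ℕ, (p + j * δ) • y + c ≤ p • y + c := by
    intro j
    induction j with
    | zero => simp
    | succ k ih =>
      have h1 : (p + (k+1) * δ) • y + c = δ • y + ((p + k * δ) • y + c) := by
        rw [← add_assoc, ← add_nsmul]; ring_nf
      rw [h1]
      calc δ • y + ((p + k * δ) • y + c) ≤ δ • y + (p • y + c) := hCu.add_le_add le_rfl ih
        _ = (δ + p) • y + c := by rw [← add_assoc, ← add_nsmul]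
        _ = q • y + c := by rw [hδ]; congr 2; omega
        _ ≤ p • y + c := hrel
  -- all multiples of y are ≤ (p+Nc)•y
  have bound : ∀ M : ℕ, M • y ≤ (p + Nc) • y := by
    intro M
    obtain ⟨j, hj⟩ : ∃ j, M ≤ p + j * δ := ⟨M, by nlinarith⟩
    calc M • y ≤ (p + j * δ) • y := nsmul_coeff_mono hCu y hj
      _ ≤ (p + j * δ) • y + c := le_add_right hCu _ _
      _ ≤ p • y + c := iter j
      _ ≤ p • y + Nc • y := hCu.add_le_add le_rfl hc
      _ = (p + Nc) • y := (add_nsmul y p Nc).symm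
  refine ⟨p + Nc + 1, ?_⟩
  calc (p + Nc + 1 + 1) • t' ≤ (p + Nc + 1 + 1) • (N' • y) := nsmul_mono hCu _ ht'
    _ = (N' * (p + Nc + 1 + 1)) • y := (mul_nsmul y _ _).symm
    _ ≤ (p + Nc) • y := bound _
    _ ≤ (p + Nc + 1) • y := nsmul_coeff_mono hCu y (by omega)

/-- Key cancellation: from `q•t + c ≤ p•y + c` with `p < q`, `c ≤ Nc•y`, `t' ≪ t`,
we get `(n+1)•t' ≤ n•y` for some `n`. -/
theorem lemE {y c t t' : S} {q p Nc : ℕ} (hrel : q • t + c ≤ p • y + c)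
    (hpq : p < q) (hc : c ≤ Nc • y) (ht' : WayBelow t' t) :
    ∃ n : ℕ, (n + 1) • t' ≤ n • y := by
  obtain ⟨cs, hcs, hclub⟩ := hCu.O2 c
  have hcmono : Monotone cs := chain_mono hCu hcs
  -- step: ∀ i ∃ j, q•t' + cs i ≤ p•y + cs j
  have step : ∀ i : ℕ, ∃ j : ℕ, q • t' + cs i ≤ p • y + cs j := by
    intro i
    have hwb : WayBelow (q • t' + cs i) (q • t + c) :=
      hCu.O3 (wb_nsmul hCu ht' q) (chain_wb hCu hcs hclub i)
    have hmono2 : Monotone (fun j => p • y + cs j) :=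
      fun a b hab => hCu.add_le_add le_rfl (hcmono hab)
    have hlub2 : IsLUB (Set.range fun j => p • y + cs j) (p • y + c) := by
      have := hCu.O4 (fun _ => p • y) cs (p • y) c monotone_const hcmono
        (by rw [Set.range_const]; exact isLUB_singleton) hclub
      exact this
    exact hwb (fun j => p • y + cs j) (p • y + c) hmono2 hlub2 hrel
  choose nxt hnxt using step
  -- sequence of indices
  let idx : ℕ → ℕ := fun k => Nat.rec 0 (fun _ i => nxt i) k
  have iter : ∀ k : ℕ, (k * q) • t' + cs 0 ≤ (k * p) • y + cs (idx k) := by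
    intro k
    induction k with
    | zero => simp [idx]
    | succ k ih =>
      have h1 : ((k+1) * q) • t' + cs 0 = q • t' + ((k * q) • t' + cs 0) := by
        rw [← add_assoc, ← add_nsmul]; ring_nf
      rw [h1]
      calc q • t' + ((k * q) • t' + cs 0) ≤ q • t' + ((k * p) • y + cs (idx k)) :=
            hCu.add_le_add le_rfl ih
        _ = (k * p) • y + (q • t' + cs (idx k)) := by
            rw [← add_assoc, ← add_assoc, add_comm (q • t') ((k*p) • y)]
        _ ≤ (k * p) • y + (p • y + cs (nxt (idx k))) := hCu.add_le_add le_rfl (hnxt (idx k))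
        _ = ((k+1) * p) • y + cs (idx (k+1)) := by
            have hi : idx (k+1) = nxt (idx k) := rfl
            rw [← add_assoc, ← add_nsmul, hi, Nat.succ_mul]
  have bound : ∀ k : ℕ, (k * q) • t' ≤ (k * p + Nc) • y := by
    intro k
    calc (k * q) • t' ≤ (k * q) • t' + cs 0 := le_add_right hCu _ _
      _ ≤ (k * p) • y + cs (idx k) := iter k
      _ ≤ (k * p) • y + c := hCu.add_le_add le_rfl (lub_le_mem hCu hclub _)
      _ ≤ (k * p) • y + Nc • y := hCu.add_le_add le_rfl hc
      _ = (k * p + Nc) • y := (add_nsmul y _ Nc).symm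
  set k := Nc + 1 with hk
  refine ⟨k * p + Nc, ?_⟩
  have hcoeff : k * p + Nc + 1 ≤ k * q := by nlinarith
  calc (k * p + Nc + 1) • t' ≤ (k * q) • t' := nsmul_coeff_mono hCu t' hcoeff
    _ ≤ (k * p + Nc) • y := bound k

end DE

end Stmt9Aux
namespace Stmt9Aux

variable {S : Type*} [AddCommMonoid S] [PartialOrder S]

section Ideal

variable (hCu : IsCuSemigroup S)

/-- The "rounded ideal" generated by `y`. -/
def idl (y : S) : Set S := {z : S | ∀ w : S, WayBelow w z → ∃ n : ℕ, w ≤ n • y}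

open Classical in
/-- The ideal functional associated to `y`. -/
noncomputable def idlFun (y : S) : S → ℝ≥0∞ := fun z => if z ∈ idl y then 0 else ∞

include hCu

theorem idl_down {y z z' : S} (h : z' ≤ z) (hz : z ∈ idl y) : z' ∈ idl y := by
  intro w hw
  exact hz w (wb_le_right hCu hw h)

theorem idl_mem_self (y : S) : y ∈ idl y := by
  intro w hw
  exact ⟨1, by simpa using wb_le hCu hw⟩

theorem idl_zero (y : S) : (0 : S) ∈ idl y := idl_down hCu (hCu.zero_le y) (idl_mem_self hCu y)

theorem idl_add {y z₁ z₂ : S} (h1 : z₁ ∈ idl y) (h2 : z₂ ∈ idl y) : z₁ + z₂ ∈ idl y := by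
  intro w hw
  obtain ⟨a, ha, halub⟩ := hCu.O2 z₁
  obtain ⟨b, hb, hblub⟩ := hCu.O2 z₂
  have hsum : IsLUB (Set.range fun n => a n + b n) (z₁ + z₂) :=
    hCu.O4 a b z₁ z₂ (chain_mono hCu ha) (chain_mono hCu hb) halub hblub
  obtain ⟨i, hi⟩ := hw (fun n => a n + b n) (z₁ + z₂)
    (fun m n hmn => hCu.add_le_add (chain_mono hCu ha hmn) (chain_mono hCu hb hmn)) hsum le_rfl
  obtain ⟨n₁, hn₁⟩ := h1 (a i) (chain_wb hCu ha halub i)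
  obtain ⟨n₂, hn₂⟩ := h2 (b i) (chain_wb hCu hb hblub i)
  exact ⟨n₁ + n₂, hi.trans (by rw [add_nsmul]; exact hCu.add_le_add hn₁ hn₂)⟩

theorem idl_sup {y : S} {f : ℕ → S} {s : S} (hf : Monotone f) (hl : IsLUB (Set.range f) s)
    (hall : ∀ n, f n ∈ idl y) : s ∈ idl y := by
  intro w hw
  obtain ⟨t, ht, htlub⟩ := hCu.O2 s
  obtain ⟨i, hi⟩ := hw t s (chain_mono hCu ht) htlub le_rfl
  -- t (i+1) ≪ t (i+2) and t (i+2) ≤ s, so t (i+1) ≤ f k for some k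
  obtain ⟨k, hk⟩ := (ht (i+1)) f s hf hl (lub_le_mem hCu htlub (i+2))
  -- t i ≪ t (i+1) ≤ f k, so t i ≪ f k and f k ∈ idl y
  have : WayBelow (t i) (f k) := wb_le_right hCu (ht i) hk
  obtain ⟨n, hn⟩ := hall k (t i) this
  exact ⟨n, hi.trans hn⟩

theorem idlFun_functional (y : S) : IsFunctional (idlFun y) := by
  constructor
  · intro a b hab
    by_cases hb : b ∈ idl y
    · have ha : a ∈ idl y := idl_down hCu hab hb
      simp [idlFun, ha, hb]
    · simp [idlFun, hb]
  · simp [idlFun, idl_zero hCu y]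
  · intro a b
    by_cases ha : a ∈ idl y <;> by_cases hb : b ∈ idl y
    · simp [idlFun, ha, hb, idl_add hCu ha hb]
    · have : ¬ (a + b ∈ idl y) := fun h => hb (idl_down hCu (by
        rw [add_comm]; exact le_add_right hCu b a) h)
      simp [idlFun, ha, hb, this]
    · have : ¬ (a + b ∈ idl y) := fun h => ha (idl_down hCu (le_add_right hCu a b) h)
      simp [idlFun, ha, hb, this]
    · have : ¬ (a + b ∈ idl y) := fun h => ha (idl_down hCu (le_add_right hCu a b) h)
      simp [idlFun, ha, hb, this]
  · intro f s hf hl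
    by_cases hall : ∀ n, f n ∈ idl y
    · have hs : s ∈ idl y := idl_sup hCu hf hl hall
      simp [idlFun, hs, hall]
    · push_neg at hall
      obtain ⟨n, hn⟩ := hall
      have hs : ¬ (s ∈ idl y) := fun h => hn (idl_down hCu (lub_le_mem hCu hl n) h)
      have htop : (⨆ k, idlFun y (f k)) = ∞ := by
        refine top_unique ?_
        refine le_trans ?_ (le_iSup (fun k => idlFun y (f k)) n)
        simp [idlFun, hn]
      rw [htop]
      simp [idlFun, hs]

end Ideal

section Lam

variable (hCu : IsCuSemigroup S)

/-- The lower-semicontinuous regularization of an additive monotone map `d`. -/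
noncomputable def lam (d : S → ℝ≥0∞) (z : S) : ℝ≥0∞ :=
  ⨆ w ∈ {w : S | ∃ w', WayBelow w w' ∧ WayBelow w' z}, d w

include hCu

theorem le_lam {d : S → ℝ≥0∞} {w w' z : S} (h1 : WayBelow w w') (h2 : WayBelow w' z) :
    d w ≤ lam d z := by
  exact le_iSup₂ (f := fun w _ => d w) w ⟨w', h1, h2⟩

theorem lam_le {d : S → ℝ≥0∞} {z : S} {C : ℝ≥0∞}
    (h : ∀ w w' : S, WayBelow w w' → WayBelow w' z → d w ≤ C) : lam d z ≤ C :=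
  iSup₂_le fun w hw => by obtain ⟨w', h1, h2⟩ := hw; exact h w w' h1 h2

theorem lam_functional {d : S → ℝ≥0∞} (hz : d 0 = 0)
    (hadd : ∀ a b : S, d (a + b) = d a + d b)
    (hmono : ∀ {a b : S}, a ≤ b → d a ≤ d b) : IsFunctional (lam d) := by
  constructor
  · intro a b hab
    refine lam_le hCu fun w w' h1 h2 => le_lam hCu h1 (wb_le_right hCu h2 hab)
  · refine le_antisymm (lam_le hCu fun w w' h1 h2 => ?_) zero_le
    have : w ≤ 0 := (wb_le hCu h1).trans (wb_le hCu h2)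
    exact le_trans (hmono this) (le_of_eq hz)
  · intro a b
    refine le_antisymm ?_ ?_
    · -- lam (a+b) ≤ lam a + lam b
      refine lam_le hCu fun w w' h1 h2 => ?_
      obtain ⟨fa, hfa, hla⟩ := hCu.O2 a
      obtain ⟨fb, hfb, hlb⟩ := hCu.O2 b
      have hsum : IsLUB (Set.range fun n => fa n + fb n) (a + b) :=
        hCu.O4 fa fb a b (chain_mono hCu hfa) (chain_mono hCu hfb) hla hlb
      obtain ⟨i, hi⟩ := h2 (fun n => fa n + fb n) (a + b)
        (fun m n hmn => hCu.add_le_add (chain_mono hCu hfa hmn) (chain_mono hCu hfb hmn))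
        hsum le_rfl
      have hw : d w ≤ d (fa i) + d (fb i) := by
        rw [← hadd]
        exact hmono ((wb_le hCu h1).trans hi)
      refine hw.trans (add_le_add ?_ ?_)
      · exact le_lam hCu (hfa i) (chain_wb hCu hfa hla (i+1))
      · exact le_lam hCu (hfb i) (chain_wb hCu hfb hlb (i+1))
    · -- lam a + lam b ≤ lam (a+b)
      rw [lam, lam]
      have hne1 : Set.Nonempty {w : S | ∃ w', WayBelow w w' ∧ WayBelow w' a} :=
        ⟨0, ⟨0, zero_wb hCu 0, zero_wb hCu a⟩⟩
      have hne2 : Set.Nonempty {w : S | ∃ w', WayBelow w w' ∧ WayBelow w' b} :=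
        ⟨0, ⟨0, zero_wb hCu 0, zero_wb hCu b⟩⟩
      refine ENNReal.biSup_add_biSup_le hne1 hne2 fun w hw v hv => ?_
      obtain ⟨w', hw1, hw2⟩ := hw
      obtain ⟨v', hv1, hv2⟩ := hv
      rw [← hadd]
      exact le_lam hCu (hCu.O3 hw1 hv1) (hCu.O3 hw2 hv2)
  · intro f s hf hl
    refine le_antisymm ?_ ?_
    · refine lam_le hCu fun w w' h1 h2 => ?_
      obtain ⟨n, hn⟩ := h2 f s hf hl le_rfl
      -- w ≪ w' ≤ f n, so w ≪ f n; interpolate inside f n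
      have hwfn : WayBelow w (f n) := wb_le_right hCu h1 hn
      obtain ⟨t, ht, htlub⟩ := hCu.O2 (f n)
      obtain ⟨i, hi⟩ := hwfn t (f n) (chain_mono hCu ht) htlub le_rfl
      have h1' : WayBelow w (t (i+1)) := le_wb hCu hi (ht i)
      have h2' : WayBelow (t (i+1)) (f n) := chain_wb hCu ht htlub (i+1)
      exact le_trans (le_lam hCu h1' h2') (le_iSup (fun n => lam d (f n)) n)
    · refine iSup_le fun n => ?_
      refine lam_le hCu fun w w' h1 h2 => ?_
      exact le_lam hCu h1 (wb_le_right hCu h2 (lub_le_mem hCu hl n))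

end Lam

end Stmt9Aux
namespace Stmt9Aux

section Groth

variable (M : Type*) [AddCommMonoid M]

/-- The Grothendieck relation on pairs. -/
def grel (p q : M × M) : Prop := ∃ e : M, p.1 + q.2 + e = q.1 + p.2 + e

theorem grel_refl (p : M × M) : grel M p p := ⟨0, rfl⟩

theorem grel_symm {p q : M × M} (h : grel M p q) : grel M q p := by
  obtain ⟨e, he⟩ := h; exact ⟨e, he.symm⟩

theorem grel_trans {p q r : M × M} (h1 : grel M p q) (h2 : grel M q r) : grel M p r := by
  obtain ⟨e₁, he₁⟩ := h1
  obtain ⟨e₂, he₂⟩ := h2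
  refine ⟨q.1 + q.2 + e₁ + e₂, ?_⟩
  calc p.1 + r.2 + (q.1 + q.2 + e₁ + e₂) = (p.1 + q.2 + e₁) + (q.1 + r.2 + e₂) := by abel
    _ = (q.1 + p.2 + e₁) + (r.1 + q.2 + e₂) := by rw [he₁, he₂]
    _ = r.1 + p.2 + (q.1 + q.2 + e₁ + e₂) := by abel

instance gsetoid : Setoid (M × M) := ⟨grel M, grel_refl M, grel_symm M, grel_trans M⟩

/-- Grothendieck group as a quotient. -/
def GG := Quotient (gsetoid M)

variable {M}

def GG.mk (p : M × M) : GG M := Quotient.mk (gsetoid M) p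

theorem GG.sound {p q : M × M} (h : grel M p q) : GG.mk p = GG.mk q := Quotient.sound h

theorem GG.exact {p q : M × M} (h : GG.mk p = GG.mk q) : grel M p q := Quotient.exact h

theorem GG.ind {motive : GG M → Prop} (h : ∀ p : M × M, motive (GG.mk p)) : ∀ g, motive g :=
  fun g => Quotient.inductionOn g h

instance : Add (GG M) :=
  ⟨Quotient.map₂ (fun p q => (p.1 + q.1, p.2 + q.2)) (by
    rintro p p' ⟨e, he⟩ q q' ⟨f, hf⟩
    refine ⟨e + f, ?_⟩
    show p.1 + q.1 + (p'.2 + q'.2) + (e + f) = p'.1 + q'.1 + (p.2 + q.2) + (e + f)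
    calc p.1 + q.1 + (p'.2 + q'.2) + (e + f) = (p.1 + p'.2 + e) + (q.1 + q'.2 + f) := by abel
      _ = (p'.1 + p.2 + e) + (q'.1 + q.2 + f) := by rw [he, hf]
      _ = p'.1 + q'.1 + (p.2 + q.2) + (e + f) := by abel)⟩

instance : Neg (GG M) :=
  ⟨Quotient.map (fun p => (p.2, p.1)) (by
    rintro p q ⟨e, he⟩
    refine ⟨e, ?_⟩
    show p.2 + q.1 + e = q.2 + p.1 + e
    calc p.2 + q.1 + e = q.1 + p.2 + e := by abel
      _ = p.1 + q.2 + e := he.symm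
      _ = q.2 + p.1 + e := by abel)⟩

instance : Zero (GG M) := ⟨GG.mk (0, 0)⟩

theorem GG.add_def (p q : M × M) : GG.mk p + GG.mk q = GG.mk (p.1 + q.1, p.2 + q.2) := rfl

theorem GG.neg_def (p : M × M) : - GG.mk p = GG.mk (p.2, p.1) := rfl

theorem GG.zero_def : (0 : GG M) = GG.mk (0, 0) := rfl

instance : AddCommGroup (GG M) where
  add_assoc := by
    refine GG.ind fun p => GG.ind fun q => GG.ind fun r => ?_
    rw [GG.add_def, GG.add_def, GG.add_def, GG.add_def]
    exact GG.sound ⟨0, by simp; abel⟩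
  zero_add := by
    refine GG.ind fun p => ?_
    rw [GG.zero_def, GG.add_def]
    exact GG.sound ⟨0, by simp⟩
  add_zero := by
    refine GG.ind fun p => ?_
    rw [GG.zero_def, GG.add_def]
    exact GG.sound ⟨0, by simp⟩
  add_comm := by
    refine GG.ind fun p => GG.ind fun q => ?_
    rw [GG.add_def, GG.add_def]
    exact GG.sound ⟨0, by simp; abel⟩
  neg_add_cancel := by
    refine GG.ind fun p => ?_
    rw [GG.neg_def, GG.add_def, GG.zero_def]
    exact GG.sound ⟨0, by simp; abel⟩
  nsmul := nsmulRec
  zsmul := zsmulRec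

/-- The canonical map. -/
def GG.of (a : M) : GG M := GG.mk (a, 0)

theorem GG.of_add (a b : M) : GG.of (a + b) = GG.of a + GG.of b := by
  rw [GG.of, GG.of, GG.of, GG.add_def]
  exact GG.sound ⟨0, by simp⟩

theorem GG.of_zero : GG.of (0 : M) = 0 := rfl

theorem GG.sub_of (a b : M) : GG.of a - GG.of b = GG.mk (a, b) := by
  rw [sub_eq_add_neg, GG.of, GG.of, GG.neg_def, GG.add_def]
  exact GG.sound ⟨0, by simp⟩

theorem GG.of_nsmul (n : ℕ) (a : M) : GG.of (n • a) = n • GG.of a := by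
  induction n with
  | zero => simp [GG.of_zero]
  | succ k ih => rw [succ_nsmul, GG.of_add, ih, succ_nsmul]

theorem GG.exists_rep (g : GG M) : ∃ a b : M, g = GG.of a - GG.of b := by
  induction g using GG.ind with
  | h p => exact ⟨p.1, p.2, by rw [GG.sub_of]⟩

/-- `of a ≤ of b` in the Grothendieck sense iff `a + c ≤ b + c` for some `c`
(for ordered monoids). -/
theorem GG.of_sub_mem {M : Type*} [AddCommMonoid M] [PartialOrder M]
    (hadd : ∀ ⦃a b c d : M⦄, a ≤ b → c ≤ d → a + c ≤ b + d) {a b : M} :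
    (GG.of b - GG.of a ∈ {g : GG M | ∃ u v : M, v ≤ u ∧ g = GG.of u - GG.of v}
      ↔ ∃ c : M, a + c ≤ b + c) := by
  constructor
  · rintro ⟨u, v, huv, heq⟩
    rw [GG.sub_of, GG.sub_of] at heq
    obtain ⟨e, he⟩ := GG.exact heq
    simp only at he
    -- he : b + v + e = u + a + e
    refine ⟨v + e, ?_⟩
    calc a + (v + e) = a + v + e := by abel
      _ ≤ a + u + e := hadd (hadd le_rfl huv) le_rfl
      _ = u + a + e := by abel
      _ = b + v + e := he.symm
      _ = b + (v + e) := by abel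
  · rintro ⟨c, hc⟩
    refine ⟨b + c, a + c, hc, ?_⟩
    rw [GG.sub_of, GG.sub_of]
    exact GG.sound ⟨0, by simp; abel⟩

end Groth

end Stmt9Aux
namespace Stmt9Aux

section GH

variable {G : Type*} [AddCommGroup G]

/-- A partial state: a graph of a partial additive, positive, normalized functional. -/
structure PState (P : Set G) (u : G) (Γ : Set (G × ℝ)) : Prop where
  mem_u : ((u, (1:ℝ)) : G × ℝ) ∈ Γ
  add_mem : ∀ ⦃p q : G × ℝ⦄, p ∈ Γ → q ∈ Γ → ((p.1 + q.1, p.2 + q.2) : G × ℝ) ∈ Γ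
  neg_mem : ∀ ⦃p : G × ℝ⦄, p ∈ Γ → ((-p.1, -p.2) : G × ℝ) ∈ Γ
  fun_eq : ∀ ⦃p q : G × ℝ⦄, p ∈ Γ → q ∈ Γ → p.1 = q.1 → p.2 = q.2
  pos : ∀ ⦃p : G × ℝ⦄, p ∈ Γ → p.1 ∈ P → 0 ≤ p.2

variable {P : Set G} {u : G}

theorem PState.zero_mem {Γ : Set (G × ℝ)} (hΓ : PState P u Γ) : ((0,0) : G × ℝ) ∈ Γ := by
  have := hΓ.add_mem hΓ.mem_u (hΓ.neg_mem hΓ.mem_u)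
  simpa using this

theorem PState.nsmul_mem {Γ : Set (G × ℝ)} (hΓ : PState P u Γ) {p : G × ℝ} (hp : p ∈ Γ)
    (n : ℕ) : ((n • p.1, n * p.2) : G × ℝ) ∈ Γ := by
  induction n with
  | zero => simpa using hΓ.zero_mem
  | succ k ih =>
    have := hΓ.add_mem ih hp
    simp only at this
    have he : (((k:ℝ) + 1) * p.2) = (k:ℝ) * p.2 + p.2 := by ring
    rw [succ_nsmul]
    push_cast
    rw [he]
    exact this

theorem PState.zsmul_mem {Γ : Set (G × ℝ)} (hΓ : PState P u Γ) {p : G × ℝ} (hp : p ∈ Γ)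
    (k : ℤ) : ((k • p.1, k * p.2) : G × ℝ) ∈ Γ := by
  rcases k with n | n
  · have := hΓ.nsmul_mem hp n
    simpa [natCast_zsmul] using this
  · have := hΓ.neg_mem (hΓ.nsmul_mem hp (n+1))
    have h1 : (Int.negSucc n) • p.1 = -((n+1 : ℕ) • p.1) := negSucc_zsmul p.1 n
    have h2 : ((Int.negSucc n : ℤ) : ℝ) * p.2 = -(((n+1 : ℕ) : ℝ) * p.2) := by
      rw [Int.negSucc_eq]
      push_cast
      ring
    rw [h1, h2]
    exact this

theorem PState.mono {Γ : Set (G × ℝ)} (hΓ : PState P u Γ) {p q : G × ℝ} (hp : p ∈ Γ)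
    (hq : q ∈ Γ) (h : q.1 - p.1 ∈ P) : p.2 ≤ q.2 := by
  have hm := hΓ.add_mem hq (hΓ.neg_mem hp)
  have h2 : ((q.1 - p.1, q.2 - p.2) : G × ℝ) ∈ Γ := by
    simpa [sub_eq_add_neg] using hm
  have := hΓ.pos h2 h
  simp only at this
  linarith

theorem ext_step (hP0 : (0:G) ∈ P) (hPadd : ∀ ⦃a b : G⦄, a ∈ P → b ∈ P → a + b ∈ P)
    (hbound : ∀ g : G, ∃ n : ℕ, (n • u - g) ∈ P ∧ (g + n • u) ∈ P)
    {Γ : Set (G × ℝ)} (hΓ : PState P u Γ) (x : G) :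
    ∃ Γ' : Set (G × ℝ), ∃ β : ℝ, PState P u Γ' ∧ Γ ⊆ Γ' ∧ ((x, β) : G × ℝ) ∈ Γ' ∧
      (∀ r : ℝ, (∀ p ∈ Γ, ∀ n : ℕ, 1 ≤ n → (p.1 - n • x) ∈ P → r ≤ p.2 / n) → r ≤ β) := by
  classical
  have hPsmul : ∀ {a : G}, a ∈ P → ∀ n : ℕ, n • a ∈ P := by
    intro a ha n
    induction n with
    | zero => simpa using hP0
    | succ k ih => rw [succ_nsmul]; exact hPadd ih ha
  set RL : Set ℝ := {t : ℝ | ∃ p ∈ Γ, ∃ n : ℕ, 1 ≤ n ∧ (n • x - p.1) ∈ P ∧ t = p.2 / n}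
    with hRL
  set RU : Set ℝ := {t : ℝ | ∃ p ∈ Γ, ∃ n : ℕ, 1 ≤ n ∧ (p.1 - n • x) ∈ P ∧ t = p.2 / n}
    with hRU
  have cross : ∀ a ∈ RL, ∀ b ∈ RU, a ≤ b := by
    rintro a ⟨p, hp, n, hn1, hnP, rfl⟩ b ⟨q, hq, m, hm1, hmP, rfl⟩
    have key : (n • q.1 - m • p.1) ∈ P := by
      have h1 : m • (n • x - p.1) ∈ P := hPsmul hnP m
      have h2 : n • (q.1 - m • x) ∈ P := hPsmul hmP n
      have heq : m • (n • x - p.1) + n • (q.1 - m • x) = n • q.1 - m • p.1 := by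
        rw [smul_sub, smul_sub, smul_smul, smul_smul, Nat.mul_comm m n]
        abel
      rw [← heq]
      exact hPadd h1 h2
    have hv1 := hΓ.nsmul_mem hp m
    have hv2 := hΓ.nsmul_mem hq n
    have := hΓ.mono hv1 hv2 key
    simp only at this
    rw [div_le_div_iff₀ (by exact_mod_cast hn1) (by exact_mod_cast hm1)]
    nlinarith [this]
  obtain ⟨n₀, hn₀1, hn₀2⟩ := hbound x
  have hRLne : RL.Nonempty := by
    refine ⟨_, (-(n₀ • u), -((n₀:ℝ) * 1)), ?_, 1, le_rfl, ?_, rfl⟩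
    · exact hΓ.neg_mem (hΓ.nsmul_mem hΓ.mem_u n₀)
    · rw [one_nsmul, sub_neg_eq_add]
      exact hn₀2
  have hRUne : RU.Nonempty := by
    refine ⟨_, ((n₀ • u), ((n₀:ℝ) * 1)), ?_, 1, le_rfl, ?_, rfl⟩
    · exact hΓ.nsmul_mem hΓ.mem_u n₀
    · rw [one_nsmul]
      exact hn₀1
  -- main construction, given a suitable β
  have main : ∀ β : ℝ, (∀ a ∈ RL, a ≤ β) → (∀ b ∈ RU, β ≤ b) →
      (∀ (k : ℤ) (s : ℝ), ((k • x, s) : G × ℝ) ∈ Γ → s = k * β) →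
      ∃ Γ' : Set (G × ℝ), PState P u Γ' ∧ Γ ⊆ Γ' ∧ ((x, β) : G × ℝ) ∈ Γ' := by
    intro β hβL hβU compat
    refine ⟨{r : G × ℝ | ∃ p ∈ Γ, ∃ k : ℤ, r = (p.1 + k • x, p.2 + k * β)}, ?_, ?_, ?_⟩
    · constructor
      · exact ⟨(u, 1), hΓ.mem_u, 0, by simp⟩
      · rintro p' q' ⟨p, hp, k, rfl⟩ ⟨q, hq, k', rfl⟩
        refine ⟨(p.1 + q.1, p.2 + q.2), hΓ.add_mem hp hq, k + k', ?_⟩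
        simp only [Prod.mk.injEq]
        constructor
        · rw [add_zsmul]; abel
        · push_cast; ring
      · rintro p' ⟨p, hp, k, rfl⟩
        refine ⟨(-p.1, -p.2), hΓ.neg_mem hp, -k, ?_⟩
        simp only [Prod.mk.injEq]
        constructor
        · rw [neg_zsmul]; abel
        · push_cast; ring
      · rintro p' q' ⟨p, hp, k, rfl⟩ ⟨q, hq, k', rfl⟩ heq
        simp only at heq ⊢
        have hdiff : (((k - k') • x, q.2 - p.2) : G × ℝ) ∈ Γ := by
          have hm := hΓ.add_mem hq (hΓ.neg_mem hp)
          simp only at hm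
          have h2 : q.1 = p.1 + k • x - k' • x := eq_sub_of_add_eq heq.symm
          have h1 : q.1 + -p.1 = (k - k') • x := by
            rw [h2, sub_zsmul]; abel
          have h3 : q.2 + -p.2 = q.2 - p.2 := by ring
          rw [h1, h3] at hm
          exact hm
        have := compat (k - k') (q.2 - p.2) hdiff
        push_cast at this
        linarith [this]
      · rintro p' ⟨p, hp, k, rfl⟩ hmem
        simp only at hmem ⊢
        rcases lt_trichotomy k 0 with hk | hk | hk
        · set n := (-k).toNat with hn
          have hnk : (n : ℤ) = -k := Int.toNat_of_nonneg (by omega)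
          have hn1 : 1 ≤ n := by omega
          have hmem' : (p.1 - n • x) ∈ P := by
            have : p.1 + k • x = p.1 - n • x := by
              rw [← natCast_zsmul, hnk, neg_zsmul]
              abel
            rwa [this] at hmem
          have hRUmem : p.2 / n ∈ RU := ⟨p, hp, n, hn1, hmem', rfl⟩
          have hb := hβU _ hRUmem
          rw [le_div_iff₀ (by exact_mod_cast hn1)] at hb
          have hkn : (k : ℝ) = -(n : ℝ) := by
            have := congrArg (fun z : ℤ => (z : ℝ)) hnk
            push_cast at this
            linarith
          rw [hkn]
          nlinarith [hb]
        · subst hk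
          simp only [zero_zsmul, add_zero, Int.cast_zero, zero_mul] at hmem ⊢
          exact hΓ.pos hp hmem
        · set n := k.toNat with hn
          have hnk : (n : ℤ) = k := Int.toNat_of_nonneg (by omega)
          have hn1 : 1 ≤ n := by omega
          have hmem' : (n • x - (-p.1)) ∈ P := by
            have : p.1 + k • x = n • x - (-p.1) := by
              rw [← natCast_zsmul, hnk]
              abel
            rwa [this] at hmem
          have hRLmem : (-p.2) / n ∈ RL := ⟨(-p.1, -p.2), hΓ.neg_mem hp, n, hn1, hmem', rfl⟩
          have hb := hβL _ hRLmem
          rw [div_le_iff₀ (by exact_mod_cast hn1)] at hb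
          have hkn : (k : ℝ) = (n : ℝ) := by
            have := congrArg (fun z : ℤ => (z : ℝ)) hnk
            push_cast at this
            linarith
          rw [hkn]
          nlinarith [hb]
    · intro r hr
      exact ⟨r, hr, 0, by simp⟩
    · exact ⟨(0,0), hΓ.zero_mem, 1, by simp⟩
  by_cases hB : ∃ n : ℕ, (1 ≤ n ∧ ∃ s : ℝ, ((n • x, s) : G × ℝ) ∈ Γ)
  · -- case B : some multiple of x is in the domain
    set m₀ := Nat.find hB with hm₀def
    obtain ⟨hm₀1, r₀, hr₀⟩ := Nat.find_spec hB
    set β := r₀ / m₀ with hβdef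
    have hm₀pos : (0:ℝ) < m₀ := by exact_mod_cast hm₀1
    have compat : ∀ (k : ℤ) (s : ℝ), ((k • x, s) : G × ℝ) ∈ Γ → s = k * β := by
      intro k s hks
      set q := k / (m₀ : ℤ) with hq
      set r := k % (m₀ : ℤ) with hr
      have hm₀ne : (m₀ : ℤ) ≠ 0 := by omega
      have hr0 : 0 ≤ r := Int.emod_nonneg k hm₀ne
      have hrlt : r < m₀ := Int.emod_lt_of_pos k (by omega)
      have hqm : ((m₀ : ℤ)) * q + r = k := Int.mul_ediv_add_emod k (m₀ : ℤ)
      -- the pair for q • (m₀ • x)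
      have hq1 : ((q • ((m₀:ℕ) • x), q * r₀) : G × ℝ) ∈ Γ := hΓ.zsmul_mem hr₀ q
      have hdiff : ((r • x, s - q * r₀) : G × ℝ) ∈ Γ := by
        have hm := hΓ.add_mem hks (hΓ.neg_mem hq1)
        simp only at hm
        have h1 : k • x + -(q • (m₀:ℕ) • x) = r • x := by
          rw [← natCast_zsmul x m₀, smul_smul, ← neg_zsmul, ← add_zsmul]
          congr 1
          linear_combination -hqm
        rw [h1, ← sub_eq_add_neg] at hm
        exact hm
      have hreq : r = 0 := by
        by_contra hne
        have hr1 : 1 ≤ r.toNat := by omega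
        have hrm : r.toNat < m₀ := by omega
        have : ¬ (1 ≤ r.toNat ∧ ∃ s : ℝ, ((r.toNat • x, s) : G × ℝ) ∈ Γ) :=
          Nat.find_min hB hrm
        refine this ⟨hr1, s - q * r₀, ?_⟩
        have : (r.toNat : ℤ) • x = r • x := by rw [Int.toNat_of_nonneg hr0]
        rw [← natCast_zsmul, this]
        exact hdiff
      have hkq : k = (m₀ : ℤ) * q := by rw [← hqm, hreq, add_zero]
      have hs : s = q * r₀ := by
        refine hΓ.fun_eq hks hq1 ?_
        simp only
        rw [← natCast_zsmul x m₀, smul_smul, hkq, mul_comm]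
      rw [hs, hβdef]
      have : (k : ℝ) = (m₀ : ℝ) * (q : ℝ) := by exact_mod_cast congrArg (fun z : ℤ => (z:ℝ)) hkq
      rw [this]
      field_simp
    have hβRU : β ∈ RU := by
      refine ⟨((m₀:ℕ) • x, r₀), hr₀, m₀, hm₀1, by simp [hP0], rfl⟩
    have hβRL : β ∈ RL := by
      refine ⟨((m₀:ℕ) • x, r₀), hr₀, m₀, hm₀1, by simp [hP0], rfl⟩
    obtain ⟨Γ', hΓ', hsub, hxmem⟩ := main β (fun a ha => cross a ha β hβRU)
      (fun b hb => cross β hβRL b hb) compat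
    refine ⟨Γ', β, hΓ', hsub, hxmem, ?_⟩
    intro r hr
    obtain ⟨p, hp, n, hn1, hnP, hbeq⟩ := hβRU
    rw [hbeq]
    exact hr p hp n hn1 hnP
  · -- case A : no multiple of x is in the domain
    push_neg at hB
    set β := sInf RU with hβdef
    have hbdd : BddBelow RU := by
      obtain ⟨a, ha⟩ := hRLne
      exact ⟨a, fun b hb => cross a ha b hb⟩
    have hβL : ∀ a ∈ RL, a ≤ β := fun a ha => le_csInf hRUne (fun b hb => cross a ha b hb)
    have hβU : ∀ b ∈ RU, β ≤ b := fun b hb => csInf_le hbdd hb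
    have compat : ∀ (k : ℤ) (s : ℝ), ((k • x, s) : G × ℝ) ∈ Γ → s = k * β := by
      intro k s hks
      rcases lt_trichotomy k 0 with hk | hk | hk
      · exfalso
        have hneg := hΓ.neg_mem hks
        simp only at hneg
        have hn : ((-k).toNat • x : G) = -(k • x) := by
          rw [← natCast_zsmul, Int.toNat_of_nonneg (by omega : (0:ℤ) ≤ -k), neg_zsmul]
        refine hB (-k).toNat (by omega) (-s) ?_
        rw [hn]
        exact hneg
      · subst hk
        simp only [zero_zsmul] at hks
        have := hΓ.fun_eq hks hΓ.zero_mem rfl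
        simp only at this
        simp [this]
      · exfalso
        have hn : (k.toNat • x : G) = k • x := by
          rw [← natCast_zsmul, Int.toNat_of_nonneg (by omega : (0:ℤ) ≤ k)]
        refine hB k.toNat (by omega) s ?_
        rw [hn]
        exact hks
    obtain ⟨Γ', hΓ', hsub, hxmem⟩ := main β hβL hβU compat
    refine ⟨Γ', β, hΓ', hsub, hxmem, ?_⟩
    intro r hr
    refine le_csInf hRUne ?_
    rintro b ⟨p, hp, n, hn1, hnP, rfl⟩
    exact hr p hp n hn1 hnP

end GH

end Stmt9Aux
namespace Stmt9Aux

section GH2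

variable {G : Type*} [AddCommGroup G] {P : Set G} {u v : G}

theorem GH_exists (hP0 : (0:G) ∈ P) (hPadd : ∀ ⦃a b : G⦄, a ∈ P → b ∈ P → a + b ∈ P)
    (hv : v ∈ P)
    (hbound : ∀ g : G, ∃ n : ℕ, (n • u - g) ∈ P ∧ (g + n • u) ∈ P)
    (hC1 : ∀ k k' : ℕ, ((k' • u - k • u) ∈ P) → k ≤ k')
    (hC3 : ∀ n k : ℕ, 1 ≤ n → ((k • u - n • v) ∈ P) → n ≤ k) :
    ∃ F : G → ℝ, (∀ g h : G, F (g + h) = F g + F h) ∧ F u = 1 ∧ 1 ≤ F v ∧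
      (∀ g ∈ P, 0 ≤ F g) := by
  classical
  have hPsmul : ∀ {a : G}, a ∈ P → ∀ n : ℕ, n • a ∈ P := by
    intro a ha n
    induction n with
    | zero => simpa using hP0
    | succ k ih => rw [succ_nsmul]; exact hPadd ih ha
  -- ℤ-version of hC1
  have hC1z : ∀ k k' : ℤ, ((k' • u - k • u) ∈ P) → k ≤ k' := by
    intro k k' hmem
    set N : ℕ := (max (-k) (-k')).toNat with hN
    have hkN : 0 ≤ k + N := by
      have : -k ≤ (N : ℤ) := by
        rw [hN]; exact le_trans (le_max_left _ _) (Int.self_le_toNat _)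
      omega
    have hk'N : 0 ≤ k' + N := by
      have : -k' ≤ (N : ℤ) := by
        rw [hN]; exact le_trans (le_max_right _ _) (Int.self_le_toNat _)
      omega
    set a := (k + N).toNat with ha
    set b := (k' + N).toNat with hb
    have haz : (a : ℤ) = k + N := Int.toNat_of_nonneg hkN
    have hbz : (b : ℤ) = k' + N := Int.toNat_of_nonneg hk'N
    have hmem2 : ((b • u - a • u) ∈ P) := by
      have heq : (b : ℤ) • u - (a : ℤ) • u = k' • u - k • u := by
        rw [haz, hbz, add_zsmul, add_zsmul]
        abel
      rw [← natCast_zsmul u a, ← natCast_zsmul u b, heq]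
      exact hmem
    have := hC1 a b hmem2
    omega
  have hC1zpos : ∀ k : ℤ, k • u ∈ P → 0 ≤ k := by
    intro k hk
    have : ((k • u - (0:ℤ) • u) ∈ P) := by
      rw [zero_zsmul, sub_zero]; exact hk
    exact hC1z 0 k this
  -- the initial partial state on multiples of u
  set Γu : Set (G × ℝ) := {p : G × ℝ | ∃ k : ℤ, p = (k • u, (k:ℝ))} with hΓu
  have hPSu : PState P u Γu := by
    constructor
    · exact ⟨1, by norm_num⟩
    · rintro p q ⟨k, rfl⟩ ⟨k', rfl⟩
      exact ⟨k + k', by simp [add_zsmul]⟩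
    · rintro p ⟨k, rfl⟩
      exact ⟨-k, by simp [neg_zsmul]⟩
    · rintro p q ⟨k, rfl⟩ ⟨k', rfl⟩ heq
      simp only at heq ⊢
      have h1 : k' • u - k • u ∈ P := by rw [heq]; simpa using hP0
      have h2 : k • u - k' • u ∈ P := by rw [heq]; simpa using hP0
      have := hC1z k k' h1
      have := hC1z k' k h2
      have : k = k' := by omega
      exact_mod_cast congrArg (fun z : ℤ => (z : ℝ)) this
    · rintro p ⟨k, rfl⟩ hmem
      simp only at hmem ⊢
      exact_mod_cast hC1zpos k hmem
  -- first extension : to v, with value ≥ 1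
  obtain ⟨Γ₁, β₀, hPS1, hsub1, hv1, hlast⟩ := ext_step hP0 hPadd hbound hPSu v
  have hβ₀ : 1 ≤ β₀ := by
    refine hlast 1 ?_
    rintro p ⟨k, rfl⟩ n hn1 hmem
    simp only at hmem ⊢
    have hk0 : 0 ≤ k := by
      refine hC1zpos k ?_
      have : k • u = (k • u - n • v) + n • v := by abel
      rw [this]
      exact hPadd hmem (hPsmul hv n)
    have hkn : n ≤ k.toNat := by
      refine hC3 n k.toNat hn1 ?_
      rwa [← natCast_zsmul u k.toNat, Int.toNat_of_nonneg hk0]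
    rw [one_le_div (by exact_mod_cast hn1)]
    have : (n : ℝ) ≤ (k.toNat : ℝ) := by exact_mod_cast hkn
    calc (n:ℝ) ≤ (k.toNat : ℝ) := this
      _ = (k : ℝ) := by exact_mod_cast congrArg (fun z : ℤ => (z : ℝ)) (Int.toNat_of_nonneg hk0)
  -- Zorn's lemma
  set C : Set (Set (G × ℝ)) := {Γ | PState P u Γ ∧ Γ₁ ⊆ Γ} with hC
  have hzorn : ∃ mΓ, Γ₁ ⊆ mΓ ∧ Maximal (· ∈ C) mΓ := by
    refine zorn_subset_nonempty C ?_ Γ₁ ⟨hPS1, subset_rfl⟩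
    intro c hcC hchain hcne
    obtain ⟨Γ₂, hΓ₂⟩ := hcne
    refine ⟨⋃₀ c, ⟨?_, fun p hp => Set.mem_sUnion.2 ⟨Γ₂, hΓ₂, (hcC hΓ₂).2 hp⟩⟩,
      fun Γ' hΓ' => Set.subset_sUnion_of_mem hΓ'⟩
    constructor
    · exact Set.mem_sUnion.2 ⟨Γ₂, hΓ₂, (hcC hΓ₂).1.mem_u⟩
    · rintro p q hp hq
      obtain ⟨Γa, hΓa, hpa⟩ := Set.mem_sUnion.1 hp
      obtain ⟨Γb, hΓb, hqb⟩ := Set.mem_sUnion.1 hq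
      rcases hchain.total hΓa hΓb with hab | hba
      · exact Set.mem_sUnion.2 ⟨Γb, hΓb, (hcC hΓb).1.add_mem (hab hpa) hqb⟩
      · exact Set.mem_sUnion.2 ⟨Γa, hΓa, (hcC hΓa).1.add_mem hpa (hba hqb)⟩
    · rintro p hp
      obtain ⟨Γa, hΓa, hpa⟩ := Set.mem_sUnion.1 hp
      exact Set.mem_sUnion.2 ⟨Γa, hΓa, (hcC hΓa).1.neg_mem hpa⟩
    · rintro p q hp hq heq
      obtain ⟨Γa, hΓa, hpa⟩ := Set.mem_sUnion.1 hp
      obtain ⟨Γb, hΓb, hqb⟩ := Set.mem_sUnion.1 hq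
      rcases hchain.total hΓa hΓb with hab | hba
      · exact (hcC hΓb).1.fun_eq (hab hpa) hqb heq
      · exact (hcC hΓa).1.fun_eq hpa (hba hqb) heq
    · rintro p hp hmem
      obtain ⟨Γa, hΓa, hpa⟩ := Set.mem_sUnion.1 hp
      exact (hcC hΓa).1.pos hpa hmem
  obtain ⟨mΓ, hsubm, hmax⟩ := hzorn
  have hPSm : PState P u mΓ := hmax.1.1
  -- totality
  have htot : ∀ g : G, ∃ r : ℝ, ((g, r) : G × ℝ) ∈ mΓ := by
    intro g
    by_contra hno
    push_neg at hno
    obtain ⟨Γ', β, hPS', hsub', hgmem, _⟩ := ext_step hP0 hPadd hbound hPSm g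
    have hΓ'C : Γ' ∈ C := ⟨hPS', hsubm.trans hsub'⟩
    have := hmax.2 hΓ'C hsub'
    exact hno β (this hgmem)
  set F : G → ℝ := fun g => Classical.choose (htot g) with hF
  have hFmem : ∀ g : G, ((g, F g) : G × ℝ) ∈ mΓ := fun g => Classical.choose_spec (htot g)
  have hFuniq : ∀ (g : G) (r : ℝ), ((g, r) : G × ℝ) ∈ mΓ → F g = r := by
    intro g r hr
    exact hPSm.fun_eq (hFmem g) hr rfl
  refine ⟨F, ?_, ?_, ?_, ?_⟩
  · intro g h
    exact hFuniq _ _ (hPSm.add_mem (hFmem g) (hFmem h))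
  · exact hFuniq _ _ hPSm.mem_u
  · rw [hFuniq v β₀ (hsubm hv1)]
    exact hβ₀
  · intro g hg
    exact hPSm.pos (hFmem g) hg

end GH2

end Stmt9Aux
namespace Stmt9Aux

variable {S : Type*} [AddCommMonoid S] [PartialOrder S]

section Key

variable (hCu : IsCuSemigroup S)
include hCu

/-- The key separation lemma: if `λ(x) ≤ γ·λ(y)` for all functionals, `γ < 1`, and
`t ≪ x`, then `(n+1)·t ≤ n·y` for some `n`. -/
theorem key_lemma {x y t : S} {γ : ℝ≥0∞} (hγ1 : γ < 1) (ht : WayBelow t x)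
    (hyp : ∀ l : S → ℝ≥0∞, IsFunctional l → l x ≤ γ * l y) :
    ∃ n : ℕ, (n + 1) • t ≤ n • y := by
  classical
  -- x lies in the ideal generated by y
  have hxidl : x ∈ idl y := by
    have h1 := hyp (idlFun y) (idlFun_functional hCu y)
    have h2 : idlFun y y = 0 := if_pos (idl_mem_self hCu y)
    rw [h2, mul_zero] at h1
    by_contra hx
    have : idlFun y x = ∞ := if_neg hx
    rw [this] at h1
    exact ENNReal.top_ne_zero (le_antisymm h1 zero_le)
  -- chain for x
  obtain ⟨f, hfseq, hflub⟩ := hCu.O2 x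
  obtain ⟨i, hi⟩ := wb_exists_le hCu ht (chain_mono hCu hfseq) hflub
  set w₁ := f (i+1) with hw₁def
  set w₂ := f (i+2) with hw₂def
  have htw₁ : WayBelow t w₁ := le_wb hCu hi (hfseq i)
  have hw₁₂ : WayBelow w₁ w₂ := hfseq (i+1)
  have hw₂x : WayBelow w₂ x := chain_wb hCu hfseq hflub (i+2)
  have hw₁x : WayBelow w₁ x := chain_wb hCu hfseq hflub (i+1)
  obtain ⟨N₁, hN₁⟩ := hxidl w₁ hw₁x
  have htN : t ≤ N₁ • y := (wb_le hCu htw₁).trans hN₁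
  -- reductio
  by_contra hR
  push_neg at hR
  -- the ideal submonoid
  set N : AddSubmonoid S :=
    { carrier := {z : S | ∃ n : ℕ, z ≤ n • y}
      add_mem' := by
        rintro a b ⟨na, hna⟩ ⟨nb, hnb⟩
        exact ⟨na + nb, by rw [add_nsmul]; exact hCu.add_le_add hna hnb⟩
      zero_mem' := ⟨0, by simp⟩ } with hNdef
  have hNdown : ∀ {z z' : S}, z' ≤ z → z ∈ N → z' ∈ N := by
    rintro z z' hzz ⟨n, hn⟩
    exact ⟨n, hzz.trans hn⟩
  have hyN : y ∈ N := ⟨1, by simp⟩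
  have hw₁N : w₁ ∈ N := ⟨N₁, hN₁⟩
  -- the Grothendieck group and positive cone
  set P' : Set (GG ↥N) := {g : GG ↥N | ∃ a b : ↥N, b ≤ a ∧ g = GG.of a - GG.of b} with hP'def
  set u' : GG ↥N := GG.of ⟨y, hyN⟩ with hu'def
  set v' : GG ↥N := GG.of ⟨w₁, hw₁N⟩ with hv'def
  have haddN : ∀ ⦃a b c d : ↥N⦄, a ≤ b → c ≤ d → a + c ≤ b + d := by
    intro a b c d hab hcd
    show ((a + c : ↥N) : S) ≤ ((b + d : ↥N) : S)
    exact hCu.add_le_add hab hcd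
  have hP0 : (0 : GG ↥N) ∈ P' := ⟨0, 0, le_rfl, by simp⟩
  have hPadd : ∀ ⦃g h : GG ↥N⦄, g ∈ P' → h ∈ P' → g + h ∈ P' := by
    rintro g h ⟨a, b, hba, rfl⟩ ⟨a', b', hba', rfl⟩
    refine ⟨a + a', b + b', haddN hba hba', ?_⟩
    rw [GG.of_add, GG.of_add]
    abel
  have hvP : v' ∈ P' := ⟨⟨w₁, hw₁N⟩, 0, (hCu.zero_le w₁ : ((0 : ↥N) : S) ≤ w₁),
    by rw [GG.of_zero, sub_zero]⟩
  have hbound : ∀ g : GG ↥N, ∃ n : ℕ, (n • u' - g) ∈ P' ∧ (g + n • u') ∈ P' := by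
    intro g
    obtain ⟨a, b, rfl⟩ := GG.exists_rep g
    obtain ⟨na, hna⟩ := a.2
    obtain ⟨nb, hnb⟩ := b.2
    refine ⟨na + nb, ⟨(na + nb) • (⟨y, hyN⟩ : ↥N) + b, a, ?_, ?_⟩, ⟨a + (na + nb) • (⟨y, hyN⟩ : ↥N), b, ?_, ?_⟩⟩
    · show (a : S) ≤ (na + nb) • y + (b : S)
      calc (a : S) ≤ na • y := hna
        _ ≤ (na + nb) • y := nsmul_coeff_mono hCu y (by omega)
        _ ≤ (na + nb) • y + b := le_add_right hCu _ _
    · rw [GG.of_add, GG.of_nsmul]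
      abel
    · show (b : S) ≤ (a : S) + (na + nb) • y
      calc (b : S) ≤ nb • y := hnb
        _ ≤ (na + nb) • y := nsmul_coeff_mono hCu y (by omega)
        _ ≤ (a : S) + (na + nb) • y := by
            have h := le_add_right hCu ((na + nb) • y) (a : S)
            rwa [add_comm ((na + nb) • y) (a : S)] at h
    · rw [GG.of_add, GG.of_nsmul]
      abel
  -- positivity unwinding
  have hC1 : ∀ k k' : ℕ, ((k' • u' - k • u') ∈ P') → k ≤ k' := by
    intro k k' hmem
    rw [hu'def, ← GG.of_nsmul, ← GG.of_nsmul] at hmem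
    obtain ⟨c, hc⟩ := (GG.of_sub_mem haddN).1 hmem
    obtain ⟨Nc, hNc⟩ := c.2
    have hcS : k • y + (c : S) ≤ k' • y + (c : S) := by
      have := hc
      push_cast at this
      convert this using 2
      exact Iff.rfl
    by_contra hkk
    exact hR _ (lemD hCu hcS (by omega) hNc htN).choose_spec
  have hC3 : ∀ n k : ℕ, 1 ≤ n → ((k • u' - n • v') ∈ P') → n ≤ k := by
    intro n k hn1 hmem
    rw [hu'def, hv'def, ← GG.of_nsmul, ← GG.of_nsmul] at hmem
    obtain ⟨c, hc⟩ := (GG.of_sub_mem haddN).1 hmem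
    obtain ⟨Nc, hNc⟩ := c.2
    have hcS : n • w₁ + (c : S) ≤ k • y + (c : S) := by
      have := hc
      push_cast at this
      convert this using 2
      exact Iff.rfl
    by_contra hkk
    exact hR _ (lemE hCu hcS (by omega) hNc htw₁).choose_spec
  -- the state
  obtain ⟨F, hFadd, hFu, hFv, hFpos⟩ := GH_exists hP0 hPadd hvP hbound hC1 hC3
  have hF0 : F 0 = 0 := by
    have := hFadd 0 0
    rw [add_zero] at this
    linarith
  have hFneg : ∀ g : GG ↥N, F (-g) = - F g := by
    intro g
    have := hFadd g (-g)
    rw [add_neg_cancel, hF0] at this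
    linarith
  have hFofpos : ∀ a : ↥N, 0 ≤ F (GG.of a) := by
    intro a
    refine hFpos _ ⟨a, 0, (hCu.zero_le a : ((0:↥N):S) ≤ a), by rw [GG.of_zero, sub_zero]⟩
  have hFmono : ∀ a b : ↥N, (a : S) ≤ (b : S) → F (GG.of a) ≤ F (GG.of b) := by
    intro a b hab
    have hmem : GG.of b - GG.of a ∈ P' := ⟨b, a, hab, rfl⟩
    have := hFpos _ hmem
    rw [sub_eq_add_neg, hFadd, hFneg] at this
    linarith
  -- the additive monotone extended map
  set d : S → ℝ≥0∞ := fun z => if h : z ∈ N then ENNReal.ofReal (F (GG.of ⟨z, h⟩)) else ∞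
    with hddef
  have hd0 : d 0 = 0 := by
    have h0 : (0 : S) ∈ N := N.zero_mem
    simp only [hddef]
    rw [dif_pos h0]
    have : (⟨(0:S), h0⟩ : ↥N) = 0 := rfl
    rw [this, GG.of_zero, hF0]
    simp
  have hdadd : ∀ a b : S, d (a + b) = d a + d b := by
    intro a b
    by_cases ha : a ∈ N
    · by_cases hb : b ∈ N
      · have hab : a + b ∈ N := N.add_mem ha hb
        simp only [hddef, dif_pos ha, dif_pos hb, dif_pos hab]
        have heq : (⟨a + b, hab⟩ : ↥N) = ⟨a, ha⟩ + ⟨b, hb⟩ := rfl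
        rw [heq, GG.of_add, hFadd, ENNReal.ofReal_add (hFofpos _) (hFofpos _)]
      · have hab : ¬ (a + b ∈ N) := fun h => hb (hNdown (by rw [add_comm]; exact le_add_right hCu b a) h)
        simp only [hddef, dif_neg hab, dif_neg hb]
        rw [add_top]
    · have hab : ¬ (a + b ∈ N) := fun h => ha (hNdown (le_add_right hCu a b) h)
      simp only [hddef, dif_neg hab, dif_neg ha]
      rw [top_add]
  have hdmono : ∀ {a b : S}, a ≤ b → d a ≤ d b := by
    intro a b hab
    by_cases hb : b ∈ N
    · have ha : a ∈ N := hNdown hab hb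
      simp only [hddef, dif_pos ha, dif_pos hb]
      exact ENNReal.ofReal_le_ofReal (hFmono _ _ hab)
    · rw [hddef]
      simp only [dif_neg hb]
      exact le_top
  -- the functional
  have hlam := lam_functional hCu hd0 hdadd hdmono
  have hly : lam d y ≤ 1 := by
    refine lam_le hCu fun w w' h1 h2 => ?_
    have hwy : w ≤ y := (wb_le hCu h1).trans (wb_le hCu h2)
    calc d w ≤ d y := hdmono hwy
      _ = ENNReal.ofReal (F u') := by simp only [hddef]; rw [dif_pos hyN]
      _ = 1 := by rw [hFu]; simp
  have hlx : 1 ≤ lam d x := by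
    have hdw₁ : d w₁ = ENNReal.ofReal (F v') := by simp only [hddef]; rw [dif_pos hw₁N]
    have h1le : (1 : ℝ≥0∞) ≤ d w₁ := by
      rw [hdw₁]
      calc (1:ℝ≥0∞) = ENNReal.ofReal 1 := by simp
        _ ≤ ENNReal.ofReal (F v') := ENNReal.ofReal_le_ofReal hFv
    exact h1le.trans (le_lam hCu hw₁₂ hw₂x)
  have hcontra := hyp (lam d) hlam
  have : (1 : ℝ≥0∞) ≤ γ := by
    calc (1:ℝ≥0∞) ≤ lam d x := hlx
      _ ≤ γ * lam d y := hcontra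
      _ ≤ γ * 1 := mul_le_mul_right hly γ
      _ = γ := mul_one γ
  exact absurd (lt_of_le_of_lt this hγ1) (lt_irrefl 1)

end Key

end Stmt9Aux
namespace Stmt9Aux

variable {S : Type*} [AddCommMonoid S] [PartialOrder S]

theorem map_nsmul {l : S → ℝ≥0∞} (hl : IsFunctional l) (n : ℕ) (z : S) :
    l (n • z) = n * l z := by
  induction n with
  | zero => simpa using hl.map_zero
  | succ k ih =>
    rw [succ_nsmul, hl.map_add, ih]
    push_cast
    ring

theorem ratio_le {a b : ℝ≥0∞} {n : ℕ} (h : ((n : ℝ≥0∞) + 1) * a ≤ n * b) :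
    a ≤ ((n : ℝ≥0∞) / (n + 1)) * b := by
  have hne0 : ((n : ℝ≥0∞) + 1) ≠ 0 := by
    simp
  have hnet : ((n : ℝ≥0∞) + 1) ≠ ⊤ := by
    refine ENNReal.add_ne_top.2 ⟨ENNReal.natCast_ne_top n, ENNReal.one_ne_top⟩
  have h1 : a ≤ ((n : ℝ≥0∞) * b) / ((n : ℝ≥0∞) + 1) := by
    rw [ENNReal.le_div_iff_mul_le (Or.inl hne0) (Or.inl hnet)]
    calc a * ((n : ℝ≥0∞) + 1) = ((n : ℝ≥0∞) + 1) * a := mul_comm _ _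
      _ ≤ n * b := h
  calc a ≤ ((n : ℝ≥0∞) * b) / ((n : ℝ≥0∞) + 1) := h1
    _ = ((n : ℝ≥0∞) / (n + 1)) * b := by
        rw [div_eq_mul_inv, div_eq_mul_inv, mul_right_comm]

section Main

variable (hCu : IsCuSemigroup S)
include hCu

theorem hard_dir {m : ℕ} (hM : MComparison (S := S) m) :
    ∀ (x : S) (y : Fin (m + 1) → S) (γ : ℝ≥0∞), 0 < γ → γ < 1 →
      (∀ l : S → ℝ≥0∞, IsFunctional l → ∀ j, l x ≤ γ * l (y j)) →
      x ≤ ∑ j, y j := by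
  intro x y γ hγ0 hγ1 hyp
  obtain ⟨f, hfseq, hflub⟩ := hCu.O2 x
  have hstep : ∀ k, f k ≤ ∑ j, y j := by
    intro k
    refine hM (f k) y fun j => ?_
    exact key_lemma hCu hγ1 (chain_wb hCu hfseq hflub k) (fun l hl => hyp l hl j)
  refine hflub.2 ?_
  rintro z ⟨k, rfl⟩
  exact hstep k

theorem easy_dir {m : ℕ}
    (hchar : ∀ (x : S) (y : Fin (m + 1) → S) (γ : ℝ≥0∞), 0 < γ → γ < 1 →
      (∀ l : S → ℝ≥0∞, IsFunctional l → ∀ j, l x ≤ γ * l (y j)) →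
      x ≤ ∑ j, y j) :
    MComparison (S := S) m := by
  intro x y hy
  choose ns hns using hy
  set γ : ℝ≥0∞ := (Finset.univ.sup fun j => (ns j : ℝ≥0∞) / (ns j + 1)) ⊔ (2⁻¹ : ℝ≥0∞)
    with hγdef
  have hhalfpos : (0 : ℝ≥0∞) < 2⁻¹ := ENNReal.inv_pos.2 (ENNReal.ofNat_ne_top (n := 2))
  refine hchar x y γ ?_ ?_ ?_
  · exact lt_of_lt_of_le hhalfpos le_sup_right
  · refine sup_lt_iff.2 ⟨?_, ?_⟩
    · refine Finset.sup_lt_iff (by norm_num) |>.2 fun j _ => ?_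
      rw [ENNReal.div_lt_iff (Or.inl (by simp)) (Or.inl (by
        refine ENNReal.add_ne_top.2 ⟨ENNReal.natCast_ne_top _, ENNReal.one_ne_top⟩))]
      rw [one_mul]
      exact ENNReal.lt_add_right (ENNReal.natCast_ne_top _) one_ne_zero
    · exact ENNReal.inv_lt_one.2 ENNReal.one_lt_two
  · intro l hl j
    have h := hl.mono (hns j)
    rw [map_nsmul hl, map_nsmul hl] at h
    push_cast at h
    have h2 : l x ≤ ((ns j : ℝ≥0∞) / (ns j + 1)) * l (y j) := ratio_le h
    refine h2.trans (mul_le_mul_left ?_ _)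
    have hsup : ((ns j : ℝ≥0∞) / (ns j + 1)) ≤
        Finset.univ.sup fun j => (ns j : ℝ≥0∞) / (ns j + 1) :=
      Finset.le_sup (f := fun j => (ns j : ℝ≥0∞) / (ns j + 1)) (Finset.mem_univ j)
    exact le_trans hsup le_sup_left

theorem part2 {m : ℕ} (hM : MComparison (S := S) m) (x y : S)
    (h : ∀ l : S → ℝ≥0∞, IsFunctional l → l x ≤ l y) :
    x ≤ (2 * (m + 1)) • y := by
  have hres := hard_dir hCu hM x (fun _ => (2 : ℕ) • y) (2⁻¹ : ℝ≥0∞)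
    (ENNReal.inv_pos.2 (ENNReal.ofNat_ne_top (n := 2))) (ENNReal.inv_lt_one.2 ENNReal.one_lt_two) ?_
  · calc x ≤ ∑ _j : Fin (m + 1), (2 : ℕ) • y := hres
      _ = (m + 1) • ((2:ℕ) • y) := by
          rw [Finset.sum_const, Finset.card_univ, Fintype.card_fin]
      _ = (2 * (m + 1)) • y := (mul_nsmul y 2 (m+1)).symm
  · intro l hl j
    rw [map_nsmul hl]
    push_cast
    rw [← mul_assoc, ENNReal.inv_mul_cancel (by norm_num) (ENNReal.ofNat_ne_top (n := 2)), one_mul]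
    exact h l hl

end Main

end Stmt9Aux

/-- Characterization of `m`-comparison in terms of functionals; in particular, under
`m`-comparison, comparison of functionals gives comparison up to the factor `2(m+1)`. -/
theorem stmt_9 {S : Type*} [AddCommMonoid S] [PartialOrder S]
    (hCu : IsCuSemigroup S) (hO5 : SatisfiesO5 S) (m : ℕ) :
    (MComparison (S := S) m ↔
      (∀ (x : S) (y : Fin (m + 1) → S) (γ : ℝ≥0∞), 0 < γ → γ < 1 →
        (∀ l : S → ℝ≥0∞, IsFunctional l → ∀ j, l x ≤ γ * l (y j)) →
        x ≤ ∑ j, y j)) ∧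
    (MComparison (S := S) m →
      ∀ x y : S, (∀ l : S → ℝ≥0∞, IsFunctional l → l x ≤ l y) →
        x ≤ (2 * (m + 1)) • y) := by
  refine ⟨⟨fun hM => Stmt9Aux.hard_dir hCu hM, fun hchar => Stmt9Aux.easy_dir hCu hchar⟩,
    fun hM x y h => Stmt9Aux.part2 hCu hM x y h⟩
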